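/- There is an absolute constant C such that the following holds. Let f : ℕ → ℂ be a completely multiplicative function with |f(n)| ≤ 1 for all n. Then for all u ≥ 1 and x ≥ 10: | ∏_{p ≤ x} (1 − f(p)/p)^{−1} − Σ_{n : P⁺(n) ≤ x, n ≤ x^u} f(n)/n | ≤ C · (log x)/e^u, where the product is over primes p ≤ x and the sum is over positive integers n all of whose prime factors are at most x and which satisfy n ≤ x^u. -/

import Mathlib

open scoped Classical

open Finset

-- L1: sum of logs of prime factors ≤ log n
lemma sum_log_primeFactors_le (n : ℕ) (hn : 1 ≤ n) :
    ∑ p ∈ n.primeFactors, Real.log p ≤ Real.log n := by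
  rw [← Real.log_prod (fun p hp => by
    exact_mod_cast (Nat.prime_of_mem_primeFactors hp).pos.ne')]
  have hd : (∏ p ∈ n.primeFactors, p) ∣ n := Nat.prod_primeFactors_dvd n
  have := Nat.le_of_dvd hn hd
  have hpos : (0:ℝ) < ∏ p ∈ n.primeFactors, (p:ℝ) := by
    apply Finset.prod_pos
    intro p hp
    exact_mod_cast (Nat.prime_of_mem_primeFactors hp).pos
  apply Real.log_le_log hpos
  rw [← Nat.cast_prod]
  exact_mod_cast this

-- telescope
lemma sum_succ_sub_telescope (g : ℕ → ℝ) (a : ℕ) :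
    ∀ b, a ≤ b + 1 → ∑ n ∈ Icc a b, (g (n+1) - g n) = g (b+1) - g a := by
  intro b
  induction b with
  | zero => intro h; interval_cases a <;> simp
  | succ b ih =>
    intro h
    rcases Nat.lt_or_ge b (a) with hb | hb
    · -- a = b+1 or a = b+2 (empty)
      rcases Nat.lt_or_ge (b+1) a with hb2 | hb2
      · have : a = b + 2 := le_antisymm h hb2
        subst this
        simp
      · have : a = b + 1 := le_antisymm hb2 hb
        subst this
        simp
    · rw [Finset.sum_Icc_succ_top (by omega), ih (by omega)]
      ring

lemma sum_log_primesBelow_le (M : ℕ) :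
    ∑ p ∈ (M+1).primesBelow, Real.log p ≤ M * Real.log 4 := by
  have hpos : 0 < primorial M := by
    rw [primorial]; exact Finset.prod_pos fun p hp => (Finset.mem_filter.mp hp).2.pos
  have h1 : ∑ p ∈ (M+1).primesBelow, Real.log p = Real.log (primorial M) := by
    rw [primorial, Nat.primesBelow, Nat.cast_prod, Real.log_prod]
    intro p hp
    simp only [Finset.mem_filter] at hp
    exact_mod_cast hp.2.pos.ne'
  rw [h1]
  have h2 : (primorial M : ℝ) ≤ (4:ℝ) ^ M := by exact_mod_cast primorial_le_4_pow M
  calc Real.log (primorial M) ≤ Real.log ((4:ℝ)^M) :=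
        Real.log_le_log (by exact_mod_cast hpos) h2
    _ = M * Real.log 4 := by rw [Real.log_pow]

lemma mertens1 (M : ℕ) (hM : 1 ≤ M) :
    ∑ p ∈ (M+1).primesBelow, Real.log p / p ≤ Real.log M + 2 := by
  have hMR : (0:ℝ) < M := by exact_mod_cast hM
  have hcard : ∀ p : ℕ, ((M / p : ℕ) : ℝ) * Real.log p
      = ∑ _n ∈ (Ioc 0 M).filter (p ∣ ·), Real.log p := by
    intro p
    rw [Finset.sum_const, ← Nat.Ioc_filter_dvd_card_eq_div M p, nsmul_eq_mul]
  have swap : ∑ p ∈ (M+1).primesBelow, ((M / p : ℕ) : ℝ) * Real.log p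
      = ∑ n ∈ Ioc 0 M, ∑ p ∈ n.primeFactors, Real.log p := by
    calc ∑ p ∈ (M+1).primesBelow, ((M / p : ℕ) : ℝ) * Real.log p
        = ∑ p ∈ (M+1).primesBelow, ∑ _n ∈ (Ioc 0 M).filter (p ∣ ·), Real.log p :=
          Finset.sum_congr rfl fun p _ => hcard p
      _ = ∑ n ∈ Ioc 0 M, ∑ p ∈ n.primeFactors, Real.log p := by
          apply Finset.sum_comm'
          intro p n
          constructor
          · rintro ⟨hp, hn⟩
            simp only [Finset.mem_filter] at hn
            refine ⟨Nat.mem_primeFactors.mpr ⟨Nat.prime_of_mem_primesBelow hp, hn.2, ?_⟩, hn.1⟩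
            exact (Finset.mem_Ioc.mp hn.1).1.ne'
          · rintro ⟨hp, hn⟩
            obtain ⟨hprime, hdvd, hne⟩ := Nat.mem_primeFactors.mp hp
            refine ⟨Nat.mem_primesBelow.mpr ⟨?_, hprime⟩, Finset.mem_filter.mpr ⟨hn, hdvd⟩⟩
            have h1 := Nat.le_of_dvd (Finset.mem_Ioc.mp hn).1 hdvd
            have h2 := (Finset.mem_Ioc.mp hn).2
            omega
  -- the double sum is at most M log M
  have hD : ∑ n ∈ Ioc 0 M, ∑ p ∈ n.primeFactors, Real.log p ≤ M * Real.log M := by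
    calc ∑ n ∈ Ioc 0 M, ∑ p ∈ n.primeFactors, Real.log p
        ≤ ∑ n ∈ Ioc 0 M, Real.log M := by
          apply Finset.sum_le_sum
          intro n hn
          obtain ⟨h0, hle⟩ := Finset.mem_Ioc.mp hn
          calc ∑ p ∈ n.primeFactors, Real.log p ≤ Real.log n :=
                sum_log_primeFactors_le n h0
            _ ≤ Real.log M := Real.log_le_log (by exact_mod_cast h0) (by exact_mod_cast hle)
      _ = (M : ℝ) * Real.log M := by
          rw [Finset.sum_const, Nat.card_Ioc, nsmul_eq_mul]; norm_num
  -- floor division lower bound: M * (log p / p) ≤ (⌊M/p⌋ + 1) * log p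
  have hfloor : ∀ p ∈ (M+1).primesBelow,
      (M:ℝ) * (Real.log p / p) ≤ (((M / p : ℕ) : ℝ) + 1) * Real.log p := by
    intro p hp
    have hprime := Nat.prime_of_mem_primesBelow hp
    have hp0 : (0:ℝ) < p := by exact_mod_cast hprime.pos
    have hlog : 0 ≤ Real.log p := Real.log_natCast_nonneg p
    have hdiv : (M:ℝ) ≤ (((M / p : ℕ) : ℝ) + 1) * p := by
      have : M < (M / p + 1) * p := by
        have h1 := Nat.div_add_mod M p
        have h2 := Nat.mod_lt M hprime.pos
        nlinarith
      have h3 : (M:ℝ) < (((M / p : ℕ):ℝ) + 1) * p := by exact_mod_cast this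
      linarith
    calc (M:ℝ) * (Real.log p / p) = (M / p) * Real.log p := by ring
      _ ≤ (((M / p : ℕ) : ℝ) + 1) * Real.log p := by
          apply mul_le_mul_of_nonneg_right _ hlog
          rw [div_le_iff₀ hp0] at *
          linarith [hdiv]
  have key : (M:ℝ) * ∑ p ∈ (M+1).primesBelow, Real.log p / p
      ≤ M * Real.log M + M * Real.log 4 := by
    calc (M:ℝ) * ∑ p ∈ (M+1).primesBelow, Real.log p / p
        = ∑ p ∈ (M+1).primesBelow, (M:ℝ) * (Real.log p / p) := Finset.mul_sum _ _ _
      _ ≤ ∑ p ∈ (M+1).primesBelow, (((M / p : ℕ) : ℝ) + 1) * Real.log p :=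
          Finset.sum_le_sum hfloor
      _ = (∑ p ∈ (M+1).primesBelow, ((M / p : ℕ) : ℝ) * Real.log p)
          + ∑ p ∈ (M+1).primesBelow, Real.log p := by
          rw [← Finset.sum_add_distrib]; congr 1; ext p; ring
      _ ≤ M * Real.log M + M * Real.log 4 := by
          rw [swap]
          exact add_le_add hD (sum_log_primesBelow_le M)
  have hlog4 : Real.log 4 ≤ 2 := by
    rw [show (4:ℝ) = 2^2 by norm_num, Real.log_pow]
    have := Real.log_two_lt_d9
    push_cast
    nlinarith
  have key' : (M:ℝ) * ∑ p ∈ (M+1).primesBelow, Real.log p / p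
      ≤ M * (Real.log M + Real.log 4) := by linarith
  have hfin := le_of_mul_le_mul_left key' hMR
  linarith [hfin, hlog4]

-- MVT lower bound for log log increments
lemma loglog_lb {s t : ℝ} (hs : 2 ≤ s) (hst : s < t) :
    (t - s) / (t * Real.log t) ≤ Real.log (Real.log t) - Real.log (Real.log s) := by
  have h1s : (1:ℝ) < s := by linarith
  have h1t : (1:ℝ) < t := by linarith
  have hder : ∀ y ∈ Set.Ioo s t, HasDerivAt (fun y => Real.log (Real.log y))
      (1 / (y * Real.log y)) y := by
    intro y hy
    have hy1 : (1:ℝ) < y := lt_trans h1s hy.1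
    have hly : 0 < Real.log y := Real.log_pos hy1
    have h := (Real.hasDerivAt_log hly.ne').comp y (Real.hasDerivAt_log (by linarith : y ≠ 0))
    rw [show (1:ℝ) / (y * Real.log y) = (Real.log y)⁻¹ * y⁻¹ by ring]
    exact h
  have hcont : ContinuousOn (fun y => Real.log (Real.log y)) (Set.Icc s t) := by
    intro y hy
    have hy1 : (1:ℝ) < y := lt_of_lt_of_le h1s hy.1
    have hly : 0 < Real.log y := Real.log_pos hy1
    exact ((Real.continuousAt_log hly.ne').comp
      (Real.continuousAt_log (by linarith : y ≠ 0))).continuousWithinAt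
  obtain ⟨c, hc, hceq⟩ := exists_hasDerivAt_eq_slope (fun y => Real.log (Real.log y))
    (fun y => 1 / (y * Real.log y)) hst hcont hder
  have hc1 : s < c := hc.1
  have hc2 : c < t := hc.2
  have hlc : 0 < Real.log c := Real.log_pos (by linarith)
  have hlt : 0 < Real.log t := Real.log_pos h1t
  have hmono : c * Real.log c ≤ t * Real.log t := by
    apply mul_le_mul (le_of_lt hc2) (Real.log_le_log (by linarith) (le_of_lt hc2)) hlc.le
    linarith
  have hcpos : 0 < c * Real.log c := mul_pos (by linarith) hlc
  have htpos : 0 < t * Real.log t := by positivity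
  have hslope : (Real.log (Real.log t) - Real.log (Real.log s)) / (t - s)
      = 1 / (c * Real.log c) := hceq.symm
  rw [div_le_iff₀ htpos]
  rw [div_eq_div_iff (by linarith : t - s ≠ 0) hcpos.ne'] at hslope
  have hΔpos : 0 ≤ Real.log (Real.log t) - Real.log (Real.log s) := by nlinarith
  nlinarith [mul_le_mul_of_nonneg_left hmono hΔpos]

-- Abel summation identity
lemma abel_identity (a φ : ℕ → ℝ) :
    ∀ N, 2 ≤ N → ∑ n ∈ Icc 2 N, a n * φ n =
      (∑ k ∈ Icc 2 N, a k) * φ N +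
        ∑ n ∈ Icc 2 (N-1), (∑ k ∈ Icc 2 n, a k) * (φ n - φ (n+1)) := by
  intro N
  induction N with
  | zero => omega
  | succ N ih =>
    intro hN
    rcases Nat.lt_or_ge N 2 with h2 | h2
    · have : N = 1 := by omega
      subst this
      norm_num
    · have hN1 : N + 1 - 1 = N := by omega
      have hNm : N - 1 + 1 = N := by omega
      rw [Finset.sum_Icc_succ_top (by omega : 2 ≤ N + 1), ih h2, hN1]
      have hsplit : ∑ n ∈ Icc 2 N, (∑ k ∈ Icc 2 n, a k) * (φ n - φ (n+1))
          = ∑ n ∈ Icc 2 (N-1), (∑ k ∈ Icc 2 n, a k) * (φ n - φ (n+1))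
            + (∑ k ∈ Icc 2 N, a k) * (φ N - φ (N+1)) := by
        conv_lhs => rw [show N = (N-1)+1 from hNm.symm]
        rw [Finset.sum_Icc_succ_top (by omega : 2 ≤ N - 1 + 1), hNm]
      rw [hsplit, Finset.sum_Icc_succ_top (by omega : 2 ≤ N + 1)]
      ring

lemma filter_prime_Icc (n : ℕ) :
    (Icc 2 n).filter Nat.Prime = (n+1).primesBelow := by
  ext p
  simp only [Finset.mem_filter, Finset.mem_Icc, Nat.mem_primesBelow]
  constructor
  · rintro ⟨⟨h2, hn⟩, hp⟩; exact ⟨by omega, hp⟩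
  · rintro ⟨hlt, hp⟩; exact ⟨⟨hp.two_le, by omega⟩, hp⟩

set_option maxHeartbeats 1000000 in
lemma mertens2 (M : ℕ) (hM : 2 ≤ M) :
    ∑ p ∈ (M+1).primesBelow, 1/(p:ℝ) ≤ Real.log (Real.log M) + 10 := by
  set a : ℕ → ℝ := fun n => if n.Prime then Real.log n / n else 0 with ha
  set φ : ℕ → ℝ := fun n => 1 / Real.log n with hφ
  have hlog2 := Real.log_two_gt_d9
  have hlog2' := Real.log_two_lt_d9
  -- A n equals prime sum
  have hAeq : ∀ n : ℕ, (∑ k ∈ Icc 2 n, a k) = ∑ p ∈ (n+1).primesBelow, Real.log p / p := by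
    intro n
    rw [← filter_prime_Icc n, Finset.sum_filter]
  have hA_ub : ∀ n : ℕ, 1 ≤ n → (∑ k ∈ Icc 2 n, a k) ≤ Real.log n + 2 := fun n hn =>
    (hAeq n) ▸ mertens1 n hn
  have hA_nn : ∀ n : ℕ, 0 ≤ ∑ k ∈ Icc 2 n, a k := by
    intro n
    apply Finset.sum_nonneg
    intro k hk
    simp only [ha]
    split
    · have h2 : 2 ≤ k := (Finset.mem_Icc.mp hk).1
      have : (0:ℝ) ≤ Real.log k := Real.log_natCast_nonneg k
      positivity
    · exact le_rfl
  -- numeric facts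
  have hloglog2 : (-1:ℝ) ≤ Real.log (Real.log 2) := by
    rw [Real.le_log_iff_exp_le (by linarith : (0:ℝ) < Real.log 2)]
    have h1 : Real.exp (-1) = 1 / Real.exp 1 := by
      rw [Real.exp_neg]; ring
    have h2 := Real.exp_one_gt_d9
    rw [h1]
    rw [div_le_iff₀ (Real.exp_pos 1)]
    nlinarith
  -- the target sum as ∑ a n * φ n
  have htarget : ∑ p ∈ (M+1).primesBelow, 1/(p:ℝ) = ∑ n ∈ Icc 2 M, a n * φ n := by
    rw [← filter_prime_Icc M, Finset.sum_filter]
    apply Finset.sum_congr rfl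
    intro k hk
    by_cases hp : k.Prime
    · simp only [ha, hφ, if_pos hp]
      have hlogk : Real.log k ≠ 0 := by
        have : (2:ℝ) ≤ k := by exact_mod_cast hp.two_le
        have := Real.log_pos (by linarith : (1:ℝ) < k)
        linarith
      rw [div_mul_div_comm, mul_one, mul_comm (k:ℝ) (Real.log k),
        div_mul_eq_div_div, div_self hlogk]
    · simp [ha, hp]
  rw [htarget, abel_identity a φ M hM]
  -- φ facts
  have hφpos : ∀ n : ℕ, 2 ≤ n → 0 < φ n := by
    intro n hn
    simp only [hφ]
    have : (1:ℝ) < n := by exact_mod_cast hn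
    have := Real.log_pos this
    positivity
  have hφmono : ∀ n : ℕ, 2 ≤ n → φ (n+1) ≤ φ n := by
    intro n hn
    simp only [hφ]
    apply one_div_le_one_div_of_le
    · exact Real.log_pos (by exact_mod_cast hn : (1:ℝ) < n)
    · apply Real.log_le_log (by positivity)
      push_cast; linarith
  -- first term bound
  have hlogM : Real.log 2 ≤ Real.log M := by
    apply Real.log_le_log (by norm_num)
    exact_mod_cast hM
  have hterm1 : (∑ k ∈ Icc 2 M, a k) * φ M ≤ 4 := by
    have h1 : (∑ k ∈ Icc 2 M, a k) ≤ Real.log M + 2 := hA_ub M (by omega)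
    have h2 : 0 < φ M := hφpos M hM
    have h3 : φ M = 1 / Real.log M := rfl
    have hlMpos : 0 < Real.log M := by linarith
    calc (∑ k ∈ Icc 2 M, a k) * φ M ≤ (Real.log M + 2) * φ M :=
          mul_le_mul_of_nonneg_right h1 h2.le
      _ = 1 + 2 / Real.log M := by rw [h3]; field_simp
      _ ≤ 1 + 2 / Real.log 2 := by
          have := div_le_div_of_nonneg_left (by norm_num : (0:ℝ) ≤ 2)
            (by linarith : (0:ℝ) < Real.log 2) hlogM
          linarith [this]
      _ ≤ 4 := by
          have : 2 / Real.log 2 ≤ 3 := by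
            rw [div_le_iff₀ (by linarith : (0:ℝ) < Real.log 2)]
            nlinarith
          linarith
  -- second part
  set g : ℕ → ℝ := fun k => Real.log (Real.log ((k:ℝ) - 1)) with hg
  have hpoint : ∀ n ∈ Icc 2 (M-1), (∑ k ∈ Icc 2 n, a k) * (φ n - φ (n+1))
      ≤ (g (n+1) - g n) + ((if n = 2 then 2 else 0) + 2 * (φ n - φ (n+1))) := by
    intro n hn
    obtain ⟨h2, _⟩ := Finset.mem_Icc.mp hn
    have hφd : 0 ≤ φ n - φ (n+1) := by linarith [hφmono n h2]
    have hAn := hA_ub n (by omega)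
    have step1 : (∑ k ∈ Icc 2 n, a k) * (φ n - φ (n+1))
        ≤ Real.log n * (φ n - φ (n+1)) + 2 * (φ n - φ (n+1)) := by
      nlinarith [hAn, hφd]
    have hlogn_pos : 0 < Real.log n := Real.log_pos (by exact_mod_cast h2)
    have hlogn1_pos : 0 < Real.log ((n:ℝ)+1) := by
      apply Real.log_pos
      have : (2:ℝ) ≤ n := by exact_mod_cast h2
      linarith
    -- log n * (φ n - φ (n+1)) ≤ 1/(n * log(n+1))
    have hmain : Real.log n * (φ n - φ (n+1)) ≤ 1 / (n * Real.log ((n:ℝ)+1)) := by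
      have hnpos : (0:ℝ) < n := by exact_mod_cast (by omega : 0 < n)
      have hd : Real.log ((n:ℝ)+1) - Real.log n ≤ 1 / n := by
        have h1 : Real.log ((n:ℝ)+1) - Real.log n = Real.log (((n:ℝ)+1)/n) := by
          rw [Real.log_div (by linarith) (by linarith)]
        rw [h1]
        have := Real.log_le_sub_one_of_pos (by positivity : (0:ℝ) < ((n:ℝ)+1)/n)
        have heq : ((n:ℝ)+1)/n - 1 = 1/n := by field_simp; ring
        linarith [heq ▸ this]
      have hφn1 : φ (n+1) = 1 / Real.log ((n:ℝ)+1) := by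
        simp only [hφ]; push_cast; ring_nf
      have hφn : φ n = 1 / Real.log n := rfl
      have hexp : Real.log n * (φ n - φ (n+1))
          = (Real.log ((n:ℝ)+1) - Real.log n) / Real.log ((n:ℝ)+1) := by
        rw [hφn, hφn1]
        field_simp
      rw [hexp]
      rw [div_le_div_iff₀ hlogn1_pos (by positivity)]
      calc (Real.log ((n:ℝ)+1) - Real.log n) * (n * Real.log ((n:ℝ)+1))
          ≤ (1/n) * (n * Real.log ((n:ℝ)+1)) := by
            apply mul_le_mul_of_nonneg_right hd (by positivity)
        _ = 1 * Real.log ((n:ℝ)+1) := by field_simp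
    -- now relate 1/(n log(n+1)) to the telescoping g
    by_cases hn2 : n = 2
    · subst hn2
      have hg2 : g 2 = 0 := by
        simp only [hg]
        norm_num
      have hg3 : g 3 = Real.log (Real.log 2) := by
        simp only [hg]
        norm_num
      have hb : 1 / ((2:ℝ) * Real.log (((2:ℕ):ℝ) + 1)) ≤ 1 := by
        have hl3 : Real.log 2 ≤ Real.log (((2:ℕ):ℝ) + 1) := by
          apply Real.log_le_log (by norm_num)
          norm_num
        have hpos : (0:ℝ) < 2 * Real.log (((2:ℕ):ℝ) + 1) := by nlinarith
        rw [div_le_one hpos]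
        nlinarith
      simp only [if_pos rfl]
      have := hmain
      push_cast at this hb ⊢
      rw [hg3, hg2]
      norm_num at step1 hφd this ⊢
      linarith [step1, hφd, this, hb, hloglog2]
    · have hn3 : 3 ≤ n := by omega
      have hlb : 1 / ((n:ℝ) * Real.log n) ≤ g (n+1) - g n := by
        have hcast1 : ((n+1:ℕ):ℝ) - 1 = (n:ℝ) := by push_cast; ring
        have h := loglog_lb (s := (n:ℝ) - 1) (t := (n:ℝ))
          (by push_cast; exact_mod_cast (by push_cast; linarith [show (3:ℝ) ≤ (n:ℝ) from by exact_mod_cast hn3] : (2:ℝ) ≤ (n:ℝ) - 1))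
          (by linarith [show (0:ℝ) < 1 from one_pos])
        have heq : (n:ℝ) - ((n:ℝ) - 1) = 1 := by ring
        rw [heq] at h
        simp only [hg, hcast1]
        exact h
      have hchain : 1 / ((n:ℝ) * Real.log ((n:ℝ)+1)) ≤ 1 / ((n:ℝ) * Real.log n) := by
        apply one_div_le_one_div_of_le
        · positivity
        · apply mul_le_mul_of_nonneg_left _ (by positivity)
          apply Real.log_le_log (by positivity)
          linarith
      simp only [if_neg hn2]
      linarith [step1, hmain, hchain, hlb]
  -- sum the pointwise bounds
  have hM1 : M - 1 + 1 = M := by omega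
  have htel1 : ∑ n ∈ Icc 2 (M-1), (g (n+1) - g n) = g M - g 2 := by
    rw [sum_succ_sub_telescope g 2 (M-1) (by omega), hM1]
  have htel2 : ∑ n ∈ Icc 2 (M-1), (φ n - φ (n+1)) = φ 2 - φ M := by
    have h := sum_succ_sub_telescope φ 2 (M-1) (by omega)
    rw [hM1] at h
    calc ∑ n ∈ Icc 2 (M-1), (φ n - φ (n+1))
        = -∑ n ∈ Icc 2 (M-1), (φ (n+1) - φ n) := by
          rw [← Finset.sum_neg_distrib]
          apply Finset.sum_congr rfl
          intro k _
          ring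
      _ = φ 2 - φ M := by rw [h]; ring
  have hite : ∑ n ∈ Icc 2 (M-1), (if n = 2 then (2:ℝ) else 0) ≤ 2 := by
    rw [Finset.sum_ite_eq' (Icc 2 (M-1)) 2 (fun _ => (2:ℝ))]
    split <;> norm_num
  have hg2 : g 2 = 0 := by simp only [hg]; norm_num
  have hgM : g M ≤ Real.log (Real.log M) + 1 := by
    rcases Nat.lt_or_ge M 3 with h3 | h3
    · have : M = 2 := by omega
      subst this
      rw [hg2]
      push_cast
      linarith [hloglog2]
    · have hM3 : (3:ℝ) ≤ M := by exact_mod_cast h3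
      have h1 : Real.log 2 ≤ Real.log ((M:ℝ) - 1) := by
        apply Real.log_le_log (by norm_num)
        linarith
      have h2 : Real.log ((M:ℝ) - 1) ≤ Real.log M := by
        apply Real.log_le_log (by linarith)
        linarith
      have : Real.log (Real.log ((M:ℝ)-1)) ≤ Real.log (Real.log M) := by
        apply Real.log_le_log (by linarith)
        linarith
      simp only [hg]
      linarith
  have hφ2 : φ 2 ≤ 3/2 := by
    have : φ 2 = 1 / Real.log 2 := by simp only [hφ]; norm_num
    rw [this, div_le_iff₀ (by linarith : (0:ℝ) < Real.log 2)]
    nlinarith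
  have hφMnn : 0 ≤ φ M := (hφpos M hM).le
  have hsum2 : ∑ n ∈ Icc 2 (M-1), (∑ k ∈ Icc 2 n, a k) * (φ n - φ (n+1))
      ≤ (g M - g 2) + 2 + 2 * (φ 2 - φ M) := by
    calc ∑ n ∈ Icc 2 (M-1), (∑ k ∈ Icc 2 n, a k) * (φ n - φ (n+1))
        ≤ ∑ n ∈ Icc 2 (M-1), ((g (n+1) - g n) + ((if n = 2 then (2:ℝ) else 0)
            + 2 * (φ n - φ (n+1)))) := Finset.sum_le_sum hpoint
      _ = (∑ n ∈ Icc 2 (M-1), (g (n+1) - g n))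
          + ((∑ n ∈ Icc 2 (M-1), (if n = 2 then (2:ℝ) else 0))
          + 2 * ∑ n ∈ Icc 2 (M-1), (φ n - φ (n+1))) := by
          rw [Finset.sum_add_distrib, Finset.sum_add_distrib, Finset.mul_sum]
      _ ≤ (g M - g 2) + 2 + 2 * (φ 2 - φ M) := by
          rw [htel1, htel2]
          linarith [hite]
  rw [hg2] at hsum2
  linarith [hterm1, hsum2, hgM, hφ2, hφMnn]

lemma sum_inv_sq (M : ℕ) : ∑ n ∈ Icc 2 M, 1/((n:ℝ))^2 ≤ 1 := by
  rcases Nat.lt_or_ge M 2 with h | h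
  · interval_cases M <;> simp
  set g : ℕ → ℝ := fun k => -1/((k:ℝ) - 1) with hg
  have htel := sum_succ_sub_telescope g 2 M (by omega)
  have hpt : ∀ n ∈ Icc 2 M, 1/((n:ℝ))^2 ≤ g (n+1) - g n := by
    intro n hn
    have h2 : 2 ≤ n := (Finset.mem_Icc.mp hn).1
    have h2R : (2:ℝ) ≤ n := by exact_mod_cast h2
    simp only [hg]
    push_cast
    have hne1 : (n:ℝ) - 1 ≠ 0 := by linarith
    have hne2 : (n:ℝ) + 1 - 1 ≠ 0 := by linarith
    have heq : -1/((n:ℝ) + 1 - 1) - (-1)/((n:ℝ) - 1) = 1/((n:ℝ)*((n:ℝ)-1)) := by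
      field_simp
      ring
    rw [heq, div_le_div_iff₀ (by positivity) (by nlinarith)]
    nlinarith
  calc ∑ n ∈ Icc 2 M, 1/((n:ℝ))^2 ≤ ∑ n ∈ Icc 2 M, (g (n+1) - g n) :=
        Finset.sum_le_sum hpt
    _ = g (M+1) - g 2 := htel
    _ ≤ 1 := by
        simp only [hg]
        push_cast
        have hM0 : (0:ℝ) ≤ M := by positivity
        have heq : (M:ℝ) + 1 - 1 = M := by ring
        rw [heq]
        have h1 : -1/(M:ℝ) ≤ 0 := div_nonpos_of_nonpos_of_nonneg (by norm_num) hM0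
        norm_num
        linarith

lemma inv_one_sub_le_exp {t : ℝ} (h0 : 0 ≤ t) (h1 : t ≤ 3/4) :
    (1 - t)⁻¹ ≤ Real.exp (t + 4*t^2) := by
  have h4 : (0:ℝ) < 1 - t := by linarith
  have hinv : (0:ℝ) < (1 - t)⁻¹ := by positivity
  rw [← Real.exp_log hinv]
  apply Real.exp_le_exp.mpr
  have h5 := Real.log_le_sub_one_of_pos hinv
  have h6 : (1 - t)⁻¹ - 1 = t / (1 - t) := by field_simp; ring
  have h7 : t / (1 - t) ≤ t + 4*t^2 := by
    rw [div_le_iff₀ h4]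
    nlinarith
  linarith [h5, h6 ▸ h5]

set_option maxHeartbeats 2000000 in
lemma prod_bound {x : ℝ} (hx : 10 ≤ x) :
    ∏ p ∈ (⌊x⌋₊+1).primesBelow, (1 - (p:ℝ)^(1/Real.log x - 1))⁻¹
      ≤ Real.exp 60 * Real.log x := by
  have hx0 : (0:ℝ) < x := by linarith
  set M := ⌊x⌋₊ with hMdef
  have hM10 : 10 ≤ M := Nat.le_floor (by exact_mod_cast hx)
  have hMx : (M:ℝ) ≤ x := Nat.floor_le hx0.le
  have hM10R : (10:ℝ) ≤ M := by exact_mod_cast hM10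
  have hexp1 := Real.exp_one_lt_d9
  have hexp1' := Real.exp_one_gt_d9
  have hlx2 : 2 ≤ Real.log x := by
    rw [Real.le_log_iff_exp_le hx0]
    rw [show (2:ℝ) = 1+1 by norm_num, Real.exp_add]
    nlinarith [Real.exp_pos 1]
  have hlxpos : 0 < Real.log x := by linarith
  set ε := 1/Real.log x with hε
  have hε0 : 0 < ε := by positivity
  have hεhalf : ε ≤ 1/2 := by
    rw [hε, div_le_div_iff₀ hlxpos (by norm_num)]
    linarith
  -- pointwise facts about t_p
  have hfacts : ∀ p ∈ (M+1).primesBelow, 2 ≤ p ∧ (p:ℝ) ≤ x ∧ (0:ℝ) < p := by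
    intro p hp
    have hprime := Nat.prime_of_mem_primesBelow hp
    have hlt := Nat.lt_of_mem_primesBelow hp
    refine ⟨hprime.two_le, ?_, by exact_mod_cast hprime.pos⟩
    have : p ≤ M := by omega
    have : (p:ℝ) ≤ M := by exact_mod_cast this
    linarith
  have ht34 : ∀ p ∈ (M+1).primesBelow, (p:ℝ)^(ε-1) ≤ 3/4 := by
    intro p hp
    obtain ⟨hp2, hpx, hp0⟩ := hfacts p hp
    have hp2R : (2:ℝ) ≤ p := by exact_mod_cast hp2
    have h1 : (p:ℝ)^(ε-1) ≤ (2:ℝ)^(ε-1) :=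
      Real.rpow_le_rpow_of_nonpos (by norm_num) hp2R (by linarith)
    have h2 : (2:ℝ)^(ε-1) ≤ (2:ℝ)^(-(1:ℝ)/2) :=
      Real.rpow_le_rpow_of_exponent_le (by norm_num) (by linarith)
    have h3 : ((2:ℝ)^(-(1:ℝ)/2))^2 = 2^(-(1:ℝ)) := by
      rw [← Real.rpow_natCast ((2:ℝ)^(-(1:ℝ)/2)) 2, ← Real.rpow_mul (by norm_num)]
      norm_num
    have h4 : (2:ℝ)^(-(1:ℝ)) = 1/2 := by
      rw [Real.rpow_neg (by norm_num), Real.rpow_one]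
      norm_num
    have h5 : (0:ℝ) ≤ (2:ℝ)^(-(1:ℝ)/2) := Real.rpow_nonneg (by norm_num) _
    have h6 : (2:ℝ)^(-(1:ℝ)/2) ≤ 3/4 := by nlinarith [h3, h4, h5]
    linarith
  have htpos : ∀ p ∈ (M+1).primesBelow, (0:ℝ) ≤ (p:ℝ)^(ε-1) := by
    intro p hp
    exact Real.rpow_nonneg (hfacts p hp).2.2.le _
  -- p^ε bounds
  have hpe : ∀ p ∈ (M+1).primesBelow, (p:ℝ)^ε ≤ 3 ∧ (p:ℝ)^ε ≤ 1 + 3*(ε * Real.log p) := by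
    intro p hp
    obtain ⟨hp2, hpx, hp0⟩ := hfacts p hp
    have hlp : 0 ≤ Real.log p := Real.log_natCast_nonneg p
    have hεlp : ε * Real.log p ≤ 1 := by
      have h1 : Real.log p ≤ Real.log x := Real.log_le_log hp0 hpx
      have : ε * Real.log p ≤ ε * Real.log x := by nlinarith
      rw [hε] at this
      calc ε * Real.log p ≤ 1/Real.log x * Real.log x := this
        _ = 1 := by field_simp
    have hre : (p:ℝ)^ε = Real.exp (ε * Real.log p) := by
      rw [Real.rpow_def_of_pos hp0]
      ring_nf
    set t := ε * Real.log p with htdef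
    have ht0 : 0 ≤ t := by positivity
    have hexp_le : Real.exp t ≤ Real.exp 1 := Real.exp_le_exp.mpr hεlp
    have hexp3 : Real.exp t ≤ 3 := by linarith
    constructor
    · rw [hre]; exact hexp3
    · rw [hre]
      have h8 := Real.add_one_le_exp (-t)
      have h9 : Real.exp (-t) = (Real.exp t)⁻¹ := Real.exp_neg t
      have h10 : (1 - t) * Real.exp t ≤ 1 := by
        rw [h9] at h8
        have hept : 0 < Real.exp t := Real.exp_pos t
        have : (1 - t) ≤ (Real.exp t)⁻¹ := by linarith
        calc (1 - t) * Real.exp t ≤ (Real.exp t)⁻¹ * Real.exp t :=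
              mul_le_mul_of_nonneg_right this hept.le
          _ = 1 := by field_simp
      nlinarith [Real.exp_pos t]
  -- Mertens applications
  have hm1 := mertens1 M (by omega)
  have hm2 := mertens2 M (by omega)
  have hMpos : (0:ℝ) < M := by linarith
  have hlogM_le : Real.log M ≤ Real.log x := Real.log_le_log hMpos hMx
  have hlogMpos : 0 < Real.log M := Real.log_pos (by linarith)
  have hloglogM : Real.log (Real.log M) ≤ Real.log (Real.log x) :=
    Real.log_le_log hlogMpos hlogM_le
  have hεlx : ε * Real.log x = 1 := by
    rw [hε]; field_simp
  -- linear sum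
  have hsum_t : ∑ p ∈ (M+1).primesBelow, (p:ℝ)^(ε-1)
      ≤ Real.log (Real.log x) + 16 := by
    have hpt : ∀ p ∈ (M+1).primesBelow,
        (p:ℝ)^(ε-1) ≤ 1/(p:ℝ) + (3*ε)*(Real.log p/p) := by
      intro p hp
      obtain ⟨hp2, hpx, hp0⟩ := hfacts p hp
      have h1 : (p:ℝ)^(ε-1) = (p:ℝ)^ε / p := by
        rw [Real.rpow_sub hp0, Real.rpow_one]
      have h2 := (hpe p hp).2
      rw [h1]
      have h3 : (p:ℝ)^ε/p ≤ (1 + 3*(ε*Real.log p))/p := by gcongr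
      have h4 : (1 + 3*(ε*Real.log p))/(p:ℝ) = 1/p + (3*ε)*(Real.log p/p) := by
        field_simp
      linarith [h4 ▸ h3]
    calc ∑ p ∈ (M+1).primesBelow, (p:ℝ)^(ε-1)
        ≤ ∑ p ∈ (M+1).primesBelow, (1/(p:ℝ) + (3*ε)*(Real.log p/p)) :=
          Finset.sum_le_sum hpt
      _ = (∑ p ∈ (M+1).primesBelow, 1/(p:ℝ))
          + (3*ε) * ∑ p ∈ (M+1).primesBelow, Real.log p/p := by
          rw [Finset.sum_add_distrib, Finset.mul_sum]
      _ ≤ (Real.log (Real.log M) + 10) + (3*ε) * (Real.log M + 2) := by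
          have h5 : (0:ℝ) ≤ 3*ε := by positivity
          have h6 : (3*ε) * (∑ p ∈ (M+1).primesBelow, Real.log p/p)
              ≤ (3*ε) * (Real.log M + 2) := mul_le_mul_of_nonneg_left hm1 h5
          linarith [hm2]
      _ ≤ Real.log (Real.log x) + 16 := by
          have h7 : ε * Real.log M ≤ 1 := by
            have : ε * Real.log M ≤ ε * Real.log x := by nlinarith
            linarith [hεlx]
          nlinarith [hloglogM, hε0, hεhalf]
  -- quadratic sum
  have hsub : (M+1).primesBelow ⊆ Icc 2 M := by
    intro p hp
    have hprime := Nat.prime_of_mem_primesBelow hp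
    have hlt := Nat.lt_of_mem_primesBelow hp
    rw [Finset.mem_Icc]
    exact ⟨hprime.two_le, by omega⟩
  have hsum_t2 : ∑ p ∈ (M+1).primesBelow, ((p:ℝ)^(ε-1))^2 ≤ 9 := by
    have hpt2 : ∀ p ∈ (M+1).primesBelow, ((p:ℝ)^(ε-1))^2 ≤ 9 * (1/(p:ℝ)^2) := by
      intro p hp
      obtain ⟨hp2, hpx, hp0⟩ := hfacts p hp
      have h1 : (p:ℝ)^(ε-1) = (p:ℝ)^ε / p := by
        rw [Real.rpow_sub hp0, Real.rpow_one]
      have h2 := (hpe p hp).1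
      have h3 : (p:ℝ)^(ε-1) ≤ 3/p := by
        rw [h1]; gcongr
      have h4 := htpos p hp
      have h5 : ((p:ℝ)^(ε-1))^2 ≤ (3/p)^2 := by nlinarith
      have h6 : ((3:ℝ)/p)^2 = 9 * (1/(p:ℝ)^2) := by
        field_simp
        norm_num
      linarith [h6 ▸ h5]
    calc ∑ p ∈ (M+1).primesBelow, ((p:ℝ)^(ε-1))^2
        ≤ ∑ p ∈ (M+1).primesBelow, 9 * (1/(p:ℝ)^2) := Finset.sum_le_sum hpt2
      _ ≤ ∑ n ∈ Icc 2 M, 9 * (1/(n:ℝ)^2) := by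
          apply Finset.sum_le_sum_of_subset_of_nonneg hsub
          intro n _ _
          positivity
      _ = 9 * ∑ n ∈ Icc 2 M, 1/(n:ℝ)^2 := by rw [Finset.mul_sum]
      _ ≤ 9 := by nlinarith [sum_inv_sq M]
  -- assemble
  calc ∏ p ∈ (M+1).primesBelow, (1 - (p:ℝ)^(ε-1))⁻¹
      ≤ ∏ p ∈ (M+1).primesBelow,
          Real.exp ((p:ℝ)^(ε-1) + 4*((p:ℝ)^(ε-1))^2) := by
        apply Finset.prod_le_prod
        · intro p hp
          have := ht34 p hp
          have h1 : (0:ℝ) < 1 - (p:ℝ)^(ε-1) := by linarith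
          positivity
        · intro p hp
          exact inv_one_sub_le_exp (htpos p hp) (ht34 p hp)
    _ = Real.exp (∑ p ∈ (M+1).primesBelow, ((p:ℝ)^(ε-1) + 4*((p:ℝ)^(ε-1))^2)) :=
        (Real.exp_sum _ _).symm
    _ ≤ Real.exp (Real.log (Real.log x) + 52) := by
        apply Real.exp_le_exp.mpr
        have hsplit : ∑ p ∈ (M+1).primesBelow, ((p:ℝ)^(ε-1) + 4*((p:ℝ)^(ε-1))^2)
            = (∑ p ∈ (M+1).primesBelow, (p:ℝ)^(ε-1))
              + 4 * ∑ p ∈ (M+1).primesBelow, ((p:ℝ)^(ε-1))^2 := by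
          rw [Finset.sum_add_distrib, Finset.mul_sum]
        rw [hsplit]
        linarith [hsum_t, hsum_t2]
    _ ≤ Real.exp 60 * Real.log x := by
        rw [Real.exp_add, Real.exp_log hlxpos]
        have : Real.exp 52 ≤ Real.exp 60 := Real.exp_le_exp.mpr (by norm_num)
        nlinarith [hlxpos, Real.exp_pos (52:ℝ)]

theorem euler_product_truncation :
    ∃ C : ℝ, ∀ f : ℕ → ℂ,
      f 1 = 1 → (∀ a b : ℕ, f (a * b) = f a * f b) → (∀ n : ℕ, ‖f n‖ ≤ 1) →
      ∀ u x : ℝ, 1 ≤ u → 10 ≤ x →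
        ‖(∏ p ∈ Finset.filter Nat.Prime (Finset.range (⌊x⌋₊ + 1)),
              (1 - f p / p)⁻¹) -
          ∑ n ∈ Finset.filter (fun n : ℕ => ∀ ℓ ∈ n.primeFactors, (ℓ : ℝ) ≤ x)
              (Finset.Icc 1 ⌊x ^ u⌋₊), f n / n‖ ≤
        C * Real.log x / Real.exp u := by
  use Real.exp 60
  intro f hf1 hfmul hfnorm u x hu hx
  have hx0 : (0:ℝ) < x := by linarith
  have hexp1 := Real.exp_one_lt_d9
  have hexp1' := Real.exp_one_gt_d9
  have hlx2 : 2 ≤ Real.log x := by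
    rw [Real.le_log_iff_exp_le hx0]
    rw [show (2:ℝ) = 1+1 by norm_num, Real.exp_add]
    nlinarith [Real.exp_pos 1]
  have hlxpos : 0 < Real.log x := by linarith
  set N := ⌊x⌋₊ + 1 with hN
  set Y := ⌊x ^ u⌋₊ with hY
  set ε := 1/Real.log x with hε
  have hε0 : 0 < ε := by positivity
  have hεhalf : ε ≤ 1/2 := by
    rw [hε, div_le_div_iff₀ hlxpos (by norm_num)]
    linarith
  -- the two completely multiplicative functions
  have hgmul : ∀ a b : ℕ, f (a*b) / ((a*b : ℕ) : ℂ) = (f a / a) * (f b / b) := by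
    intro a b
    rw [hfmul a b]
    push_cast
    rw [div_mul_div_comm]
  have hhmul : ∀ a b : ℕ, ((a*b : ℕ) : ℝ) ^ (ε-1) = (a:ℝ)^(ε-1) * (b:ℝ)^(ε-1) := by
    intro a b
    push_cast
    rw [Real.mul_rpow (by positivity) (by positivity)]
  set g : ℕ →* ℂ := ⟨⟨fun n => f n / n, by simp [hf1]⟩, fun a b => hgmul a b⟩ with hg
  set h : ℕ →* ℝ := ⟨⟨fun n => (n:ℝ) ^ (ε - 1), by simp⟩, fun a b => hhmul a b⟩ with hh
  have hgp : ∀ {p : ℕ}, p.Prime → ‖g p‖ < 1 := by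
    intro p hp
    have hp2 : (2:ℝ) ≤ p := by exact_mod_cast hp.two_le
    have hgnorm : ‖g p‖ = ‖f p‖ / p := by
      show ‖f p / (p:ℂ)‖ = ‖f p‖ / p
      rw [norm_div, Complex.norm_natCast]
    rw [hgnorm]
    have := hfnorm p
    rw [div_lt_one (by linarith : (0:ℝ) < p)]
    linarith
  have hhp : ∀ {p : ℕ}, p.Prime → ‖h p‖ < 1 := by
    intro p hp
    have hp1 : (1:ℝ) < p := by exact_mod_cast hp.one_lt
    have hnn : (0:ℝ) ≤ (p:ℝ)^(ε-1) := Real.rpow_nonneg (by positivity) _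
    show ‖(p:ℝ)^(ε-1)‖ < 1
    rw [Real.norm_eq_abs, abs_of_nonneg hnn]
    exact Real.rpow_lt_one_of_one_lt_of_neg hp1 (by linarith)
  obtain ⟨hgsum, hgHasSum⟩ :=
    EulerProduct.summable_and_hasSum_smoothNumbers_prod_primesBelow_geometric
      (f := g) hgp N
  obtain ⟨hhsum, hhHasSum⟩ :=
    EulerProduct.summable_and_hasSum_smoothNumbers_prod_primesBelow_geometric
      (f := h) hhp N
  set S := N.smoothNumbers with hS
  set T := Finset.filter (fun n : ℕ => ∀ ℓ ∈ n.primeFactors, (ℓ : ℝ) ≤ x)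
      (Finset.Icc 1 Y) with hT
  -- membership characterization
  have hTmem : ∀ n : ℕ, n ∈ T ↔ n ∈ S ∧ n ≤ Y := by
    intro n
    rw [hT, Finset.mem_filter, Finset.mem_Icc]
    constructor
    · rintro ⟨⟨h1, h2⟩, h3⟩
      refine ⟨Nat.mem_smoothNumbers_of_primeFactors_subset (by omega) ?_, h2⟩
      intro ℓ hℓ
      have := h3 ℓ hℓ
      have hfl : ℓ ≤ ⌊x⌋₊ := Nat.le_floor this
      rw [Finset.mem_range]
      omega
    · rintro ⟨h1, h2⟩
      have hn0 : n ≠ 0 := Nat.ne_zero_of_mem_smoothNumbers h1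
      have hsub := Nat.primeFactors_subset_of_mem_smoothNumbers h1
      refine ⟨⟨by omega, h2⟩, ?_⟩
      intro ℓ hℓ
      have := hsub hℓ
      have hlt := Nat.lt_of_mem_primesBelow this
      have : ℓ ≤ ⌊x⌋₊ := by omega
      calc (ℓ:ℝ) ≤ (⌊x⌋₊ : ℝ) := by exact_mod_cast this
        _ ≤ x := Nat.floor_le hx0.le
  -- indicator functions
  set F : ℕ → ℂ := Set.indicator S (⇑g) with hF
  set B : ℕ → ℝ := Set.indicator S (⇑h) with hB
  have hgS : Summable (fun m : S => g m) := Summable.of_norm hgsum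
  have hhS : Summable (fun m : S => h m) := Summable.of_norm hhsum
  have hFsum : Summable F := summable_subtype_iff_indicator.mp hgS
  have hBsum : Summable B := summable_subtype_iff_indicator.mp hhS
  have hFnormsum : Summable (fun i => ‖F i‖) := by
    have heq : (fun i => ‖F i‖) = Set.indicator S (fun i => ‖g i‖) := by
      funext i
      exact norm_indicator_eq_indicator_norm (⇑g) i
    rw [heq]
    exact summable_subtype_iff_indicator.mp hgsum
  have htsumF : ∑' n, F n = ∏ p ∈ N.primesBelow, (1 - g p)⁻¹ := by
    rw [hF, ← _root_.tsum_subtype]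
    exact hgHasSum.tsum_eq
  have htsumB : ∑' n, B n = ∏ p ∈ N.primesBelow, (1 - h p)⁻¹ := by
    rw [hB, ← _root_.tsum_subtype]
    exact hhHasSum.tsum_eq
  have hsum_split := Summable.sum_add_tsum_compl (s := T) hFsum
  -- identify the product in the goal
  have hPB : Finset.filter Nat.Prime (Finset.range N) = N.primesBelow := by
    ext p
    simp [Nat.mem_primesBelow]
  have hprod_eq : (∏ p ∈ Finset.filter Nat.Prime (Finset.range N), (1 - f p / p)⁻¹)
      = ∏ p ∈ N.primesBelow, (1 - g p)⁻¹ := by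
    rw [hPB]
    rfl
  have hsumT : ∑ n ∈ T, f n / n = ∑ n ∈ T, F n := by
    apply Finset.sum_congr rfl
    intro n hn
    have hnS : n ∈ S := ((hTmem n).mp hn).1
    rw [hF, Set.indicator_of_mem hnS]
    rfl
  have hdiff : (∏ p ∈ Finset.filter Nat.Prime (Finset.range N), (1 - f p / p)⁻¹)
      - ∑ n ∈ T, f n / n = ∑' (i : ((T : Set ℕ)ᶜ : Set ℕ)), F i := by
    rw [hprod_eq, ← htsumF, hsumT, ← hsum_split]
    ring
  rw [hdiff]
  -- pointwise bound
  have hpoint : ∀ n : ℕ, Set.indicator ((T : Set ℕ)ᶜ) (fun i => ‖F i‖) n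
      ≤ Real.exp (-u) * B n := by
    intro n
    have hBnn : 0 ≤ B n := by
      rw [hB]
      apply Set.indicator_nonneg
      intro i _
      exact Real.rpow_nonneg (by positivity) _
    have hRHSnn : 0 ≤ Real.exp (-u) * B n := mul_nonneg (Real.exp_pos _).le hBnn
    by_cases hnT : n ∈ (T : Set ℕ)
    · rw [Set.indicator_of_notMem (by simpa using hnT)]
      exact hRHSnn
    · rw [Set.indicator_of_mem (by simpa using hnT)]
      by_cases hnS : n ∈ S
      · rw [hF, Set.indicator_of_mem hnS, hB, Set.indicator_of_mem hnS]
        have hn0 : n ≠ 0 := Nat.ne_zero_of_mem_smoothNumbers hnS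
        have hn0R : (0:ℝ) < n := by exact_mod_cast Nat.pos_of_ne_zero hn0
        have hnY : Y < n := by
          by_contra hc
          exact hnT ((hTmem n).mpr ⟨hnS, by omega⟩)
        have hgn : ‖g n‖ ≤ 1 / n := by
          show ‖f n / (n:ℂ)‖ ≤ 1/n
          rw [norm_div, Complex.norm_natCast]
          gcongr
          exact hfnorm n
        have hkey : 1/(n:ℝ) ≤ Real.exp (-u) * (n:ℝ)^(ε-1) := by
          have hxu_pos : 0 < x^u := Real.rpow_pos_of_pos hx0 u
          have hnR : x^u < n := by
            have h1 : x^u < (Y:ℝ) + 1 := Nat.lt_floor_add_one _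
            have h2 : (Y:ℝ) + 1 ≤ n := by exact_mod_cast hnY
            linarith
          have h1 : (x^u)^ε ≤ (n:ℝ)^ε :=
            Real.rpow_le_rpow hxu_pos.le hnR.le hε0.le
          have h2 : (x^u)^ε = Real.exp u := by
            rw [← Real.rpow_mul hx0.le, Real.rpow_def_of_pos hx0]
            congr 1
            rw [hε]
            field_simp
          have h3 : (n:ℝ)^(ε-1) = (n:ℝ)^ε / n := by
            rw [Real.rpow_sub hn0R, Real.rpow_one]
          rw [h3, Real.exp_neg]
          have hEu : 0 < Real.exp u := Real.exp_pos u
          have h4 : Real.exp u ≤ (n:ℝ)^ε := h2 ▸ h1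
          rw [div_le_iff₀ hn0R] at *
          have h5 : (Real.exp u)⁻¹ * ((n:ℝ)^ε / n) * n = (n:ℝ)^ε / Real.exp u := by
            field_simp
          rw [h5]
          rw [le_div_iff₀ hEu]
          linarith
        show ‖g n‖ ≤ Real.exp (-u) * (n:ℝ)^(ε-1)
        calc ‖g n‖ ≤ 1/(n:ℝ) := hgn
          _ ≤ Real.exp (-u) * (n:ℝ)^(ε-1) := hkey
      · rw [hF, Set.indicator_of_notMem hnS]
        simpa using hRHSnn
  -- chain of bounds
  have hQ : ∏ p ∈ N.primesBelow, (1 - h p)⁻¹ ≤ Real.exp 60 * Real.log x := by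
    have h2 : ∀ p : ℕ, h p = (p:ℝ)^(1/Real.log x - 1) := fun p => rfl
    simp only [h2]
    exact prod_bound hx
  calc ‖∑' (i : ((T : Set ℕ)ᶜ : Set ℕ)), F i‖
      ≤ ∑' (i : ((T : Set ℕ)ᶜ : Set ℕ)), ‖F i‖ :=
        norm_tsum_le_tsum_norm (hFnormsum.subtype _)
    _ = ∑' (n : ℕ), Set.indicator ((T : Set ℕ)ᶜ) (fun i => ‖F i‖) n :=
        by exact _root_.tsum_subtype ((T : Set ℕ)ᶜ) (fun i => ‖F i‖)
    _ ≤ ∑' (n : ℕ), Real.exp (-u) * B n := by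
        apply Summable.tsum_le_tsum hpoint
        · exact hFnormsum.indicator _
        · exact hBsum.mul_left _
    _ = Real.exp (-u) * ∑' (n : ℕ), B n := tsum_mul_left
    _ ≤ Real.exp (-u) * (Real.exp 60 * Real.log x) := by
        apply mul_le_mul_of_nonneg_left _ (Real.exp_pos _).le
        rw [htsumB]
        exact hQ
    _ = Real.exp 60 * Real.log x / Real.exp u := by
        rw [Real.exp_neg]
        field_simp
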